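/- Let N ≥ 2, let c < r be indices in {0, …, N−1}, and let M be an N × N complex matrix that agrees with the identity matrix at every entry except possibly (c,c), (c,r), (r,c), (r,r). Then M is unitary if and only if its component matrix, i.e., the 2 × 2 matrix [[M[c,c], M[c,r]], [M[r,c], M[r,r]]], is unitary. -/
import Mathlib

/-- A two-level matrix (acting on components `c < r`) is unitary if and only if its
`2 × 2` component matrix is unitary. -/
theorem twoLevel_unitary_iff_component_unitary (N : ℕ) (hN : 2 ≤ N)
    (c r : Fin N) (hcr : c < r) (M : Matrix (Fin N) (Fin N) ℂ)
    (hM : ∀ i j : Fin N, ¬((i = c ∨ i = r) ∧ (j = c ∨ j = r)) →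
      M i j = (1 : Matrix (Fin N) (Fin N) ℂ) i j) :
    M ∈ Matrix.unitaryGroup (Fin N) ℂ ↔
      (Matrix.of ![![M c c, M c r], ![M r c, M r r]]) ∈ Matrix.unitaryGroup (Fin 2) ℂ := by
  have hcr' : c ≠ r := ne_of_lt hcr
  set A : Matrix (Fin 2) (Fin 2) ℂ := Matrix.of ![![M c c, M c r], ![M r c, M r r]] with hA
  have hoff : ∀ i j : Fin N, (i ≠ c ∧ i ≠ r) ∨ (j ≠ c ∧ j ≠ r) →
      M i j = if i = j then 1 else 0 := by
    intro i j h
    rw [hM i j (by tauto), Matrix.one_apply]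
  have hsum : ∀ i j : Fin N, (i = c ∨ i = r) →
      (M * star M) i j = M i c * star (M j c) + M i r * star (M j r) := by
    intro i j hi
    rw [Matrix.mul_apply, ← Finset.sum_subset (Finset.subset_univ {c, r})]
    · rw [Finset.sum_pair hcr']
      simp [Matrix.star_apply]
    · intro k _ hk
      simp only [Finset.mem_insert, Finset.mem_singleton, not_or] at hk
      have hik : i ≠ k := by rcases hi with h | h <;> subst h <;> tauto
      have h0 : M i k = 0 := by rw [hoff i k (Or.inr hk)]; simp [hik]
      simp [h0]
  have hAM : ∀ p q : Fin 2, (A * star A) p q = (M * star M) (![c, r] p) (![c, r] q) := by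
    intro p q
    rw [hsum _ _ (by fin_cases p <;> simp)]
    fin_cases p <;> fin_cases q <;>
      simp [Matrix.mul_apply, Fin.sum_univ_two, Matrix.star_apply, hA]
  rw [Matrix.mem_unitaryGroup_iff, Matrix.mem_unitaryGroup_iff]
  constructor
  · intro h
    ext p q
    rw [hAM, h]
    fin_cases p <;> fin_cases q <;>
      simp [Matrix.one_apply, hcr', hcr'.symm]
  · intro h
    have e00 : M c c * star (M c c) + M c r * star (M c r) = 1 := by
      have := congrFun (congrFun h 0) 0
      simpa [Matrix.mul_apply, Fin.sum_univ_two, Matrix.star_apply, hA, Matrix.one_apply]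
        using this
    have e01 : M c c * star (M r c) + M c r * star (M r r) = 0 := by
      have := congrFun (congrFun h 0) 1
      simpa [Matrix.mul_apply, Fin.sum_univ_two, Matrix.star_apply, hA, Matrix.one_apply]
        using this
    have e10 : M r c * star (M c c) + M r r * star (M c r) = 0 := by
      have := congrFun (congrFun h 1) 0
      simpa [Matrix.mul_apply, Fin.sum_univ_two, Matrix.star_apply, hA, Matrix.one_apply]
        using this
    have e11 : M r c * star (M r c) + M r r * star (M r r) = 1 := by
      have := congrFun (congrFun h 1) 1
      simpa [Matrix.mul_apply, Fin.sum_univ_two, Matrix.star_apply, hA, Matrix.one_apply]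
        using this
    ext i j
    by_cases hi : i = c ∨ i = r
    · rw [hsum i j hi]
      by_cases hj : j = c ∨ j = r
      · rcases hi with rfl | rfl <;> rcases hj with rfl | rfl
        · rw [Matrix.one_apply_eq]; exact e00
        · rw [Matrix.one_apply_ne hcr']; exact e01
        · rw [Matrix.one_apply_ne hcr'.symm]; exact e10
        · rw [Matrix.one_apply_eq]; exact e11
      · push_neg at hj
        have h1 : M j c = 0 := by rw [hoff j c (Or.inl hj)]; simp [hj.1]
        have h2 : M j r = 0 := by rw [hoff j r (Or.inl hj)]; simp [hj.2]
        have hij : i ≠ j := by rcases hi with rfl | rfl <;> tauto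
        rw [h1, h2, Matrix.one_apply_ne hij]
        simp
    · push_neg at hi
      rw [Matrix.mul_apply, Finset.sum_eq_single i]
      · have h1 : M i i = 1 := by rw [hoff i i (Or.inl hi)]; simp
        have h2 : M j i = if j = i then 1 else 0 := hoff j i (Or.inr hi)
        rw [Matrix.star_apply, h1, h2, one_mul]
        by_cases hji : j = i
        · subst hji; simp [Matrix.one_apply]
        · simp [hji, Matrix.one_apply_ne (fun h' => hji h'.symm)]
      · intro b _ hb
        have : M i b = 0 := by rw [hoff i b (Or.inl hi)]; simp [Ne.symm hb]
        simp [this]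
      · simp
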